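/- Growing reference window characterization (proper case): let a, l > 0 and f : [0,∞) → ℝ continuous with 0 ≤ f ≤ 1. If (1/t)·∫_{0}^{t} f(x) dx = (1/l)·∫_{t}^{t+l} f(x) dx for all t ≥ a, then f is constant on [a,∞) with value equal to (1/a)·∫_{0}^{a} f(x) dx. -/

import Mathlib

open MeasureTheory intervalIntegral

theorem growing_reference_window_constant (f : ℝ → ℝ) (a l : ℝ)
    (ha : 0 < a) (hl : 0 < l) (hf : ContinuousOn f (Set.Ici 0))
    (hbd : ∀ t : ℝ, 0 ≤ t → 0 ≤ f t ∧ f t ≤ 1)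
    (h : ∀ t : ℝ, a ≤ t →
      (1 / t) * ∫ x in (0:ℝ)..t, f x = (1 / l) * ∫ x in t..(t + l), f x) :
    ∀ t : ℝ, a ≤ t → f t = (1 / a) * ∫ x in (0:ℝ)..a, f x := by
  set F : ℝ → ℝ := fun t => ∫ x in (0:ℝ)..t, f x with hFdef
  -- interval integrability on nonnegative intervals
  have hint : ∀ s t : ℝ, 0 ≤ s → 0 ≤ t → IntervalIntegrable f volume s t := by
    intro s t hs ht
    apply ContinuousOn.intervalIntegrable
    apply hf.mono
    intro x hx
    rcases Set.mem_uIcc.mp hx with ⟨h1, _⟩ | ⟨h1, _⟩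
    · exact hs.trans h1
    · exact ht.trans h1
  -- derivative of F
  have hF0 : ∀ {t : ℝ}, 0 < t → HasDerivAt F (f t) t := by
    intro t ht
    have hct : ContinuousAt f t := hf.continuousAt (Ici_mem_nhds ht)
    exact intervalIntegral.integral_hasDerivAt_right (hint 0 t le_rfl ht.le)
      ⟨Set.Ioi 0, Ioi_mem_nhds ht, hf.mono (Set.Ioi_subset_Ici le_rfl)
        |>.aestronglyMeasurable measurableSet_Ioi⟩ hct
  -- the window integral in terms of F
  have hadd : ∀ t : ℝ, a ≤ t → (∫ x in t..t + l, f x) = F (t + l) - F t := by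
    intro t ht
    have h0t : (0:ℝ) ≤ t := (ha.le.trans ht)
    have h1 := intervalIntegral.integral_add_adjacent_intervals
      (hint 0 t le_rfl h0t) (hint t (t + l) h0t (by linarith))
    simp only [hFdef]
    linarith [h1]
  -- key algebraic relation
  have hkey : ∀ t : ℝ, a ≤ t → l * F t = t * (F (t + l) - F t) := by
    intro t ht
    have ht0 : t ≠ 0 := ne_of_gt (ha.trans_le ht)
    have := h t ht
    rw [hadd t ht] at this
    field_simp at this
    linarith [this]
  -- G = F / id
  set G : ℝ → ℝ := fun t => F t / t with hGdef
  set D : ℝ → ℝ := fun t => (f t * t - F t) / t ^ 2 with hDdef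
  have hG' : ∀ {t : ℝ}, 0 < t → HasDerivAt G (D t) t := by
    intro t ht
    have := (hF0 ht).div (hasDerivAt_id t) (ne_of_gt ht)
    simp [hDdef, mul_one] at this
    exact this
  -- f (t + l) = f t + l * D t for t > a
  have hshift : ∀ t : ℝ, a < t → f (t + l) = f t + l * D t := by
    intro t ht
    have htpos : (0:ℝ) < t := ha.trans ht
    have htl : (0:ℝ) < t + l := by linarith
    -- Φ s = l * F s - s * (F (s+l) - F s) is eventually zero near t
    have hev : (fun s => l * F s - s * (F (s + l) - F s)) =ᶠ[nhds t] (fun _ => (0:ℝ)) := by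
      filter_upwards [Ioi_mem_nhds ht] with s hs
      have := hkey s (le_of_lt hs)
      simp only [Set.mem_Ioi] at hs
      linarith [hkey s (le_of_lt (Set.mem_Ioi.mp hs))]
    have hd1 : HasDerivAt (fun s : ℝ => F (s + l)) (f (t + l)) t := by
      have := (hF0 htl).comp t ((hasDerivAt_id t).add_const l)
      simp at this
      exact this
    have hd2 : HasDerivAt (fun s => l * F s - s * (F (s + l) - F s))
        (l * f t - (1 * (F (t + l) - F t) + t * (f (t + l) - f t))) t :=
      ((hF0 htpos).const_mul l).sub ((hasDerivAt_id t).mul (hd1.sub (hF0 htpos)))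
    have hzero : HasDerivAt (fun s => l * F s - s * (F (s + l) - F s)) 0 t :=
      (hasDerivAt_const t (0:ℝ)).congr_of_eventuallyEq hev
    have huniq := hd2.unique hzero
    have hk := hkey t ht.le
    have ht0 : t ≠ 0 := ne_of_gt htpos
    simp only [hDdef]
    field_simp
    nlinarith [huniq, hk]
  -- D is l-periodic on (a, ∞)
  have hDper : ∀ t : ℝ, a < t → D (t + l) = D t := by
    intro t ht
    have htpos : (0:ℝ) < t := ha.trans ht
    have htl : (0:ℝ) < t + l := by linarith
    have hd1 : HasDerivAt (fun s : ℝ => G (s + l)) (D (t + l)) t := by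
      have := (hG' htl).comp t ((hasDerivAt_id t).add_const l)
      simp at this
      exact this
    have hev : (fun s : ℝ => G (s + l)) =ᶠ[nhds t] G := by
      filter_upwards [Ioi_mem_nhds ht] with s hs
      have hs' : a ≤ s := le_of_lt (Set.mem_Ioi.mp hs)
      have hs0 : s ≠ 0 := by have := ha.trans_le hs'; positivity
      have hsl : (s + l) ≠ 0 := by have := ha.trans_le hs'; positivity
      have hk := hkey s hs'
      simp only [hGdef]
      field_simp
      nlinarith [hk]
    have hd2 : HasDerivAt G (D (t + l)) t := hd1.congr_of_eventuallyEq hev.symm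
    exact hd2.unique (hG' htpos)
  -- iterate
  have hDiter : ∀ t : ℝ, a < t → ∀ n : ℕ, D (t + n * l) = D t := by
    intro t ht n
    induction n with
    | zero => simp
    | succ n ih =>
      have h1 : a < t + n * l := by
        have : (0:ℝ) ≤ n * l := by positivity
        linarith
      have := hDper (t + n * l) h1
      push_cast
      rw [show t + (n + 1 : ℝ) * l = (t + n * l) + l by ring, this, ih]
  have hiter : ∀ t : ℝ, a < t → ∀ n : ℕ, f (t + n * l) = f t + n * (l * D t) := by
    intro t ht n
    induction n with
    | zero => simp
    | succ n ih =>
      have h1 : a < t + n * l := by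
        have : (0:ℝ) ≤ n * l := by positivity
        linarith
      have h2 := hshift (t + n * l) h1
      rw [hDiter t ht n] at h2
      push_cast
      rw [show t + (n + 1 : ℝ) * l = (t + n * l) + l by ring, h2, ih]
      ring
  -- D vanishes on (a, ∞)
  have hD0 : ∀ t : ℝ, a < t → D t = 0 := by
    intro t ht
    have htpos : (0:ℝ) < t := ha.trans ht
    have hld : l * D t = 0 := by
      by_contra hne
      rcases lt_or_gt_of_ne hne with hneg | hpos
      · -- eventually negative
        obtain ⟨n, hn⟩ := exists_nat_gt ((0 - f t) / (l * D t))
        have hn' : (n : ℝ) * (l * D t) < 0 - f t := by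
          rw [div_lt_iff_of_neg hneg] at hn
          linarith
        have hmem : (0:ℝ) ≤ t + n * l := by
          have : (0:ℝ) ≤ (n:ℝ) * l := by positivity
          linarith
        have := (hbd (t + n * l) hmem).1
        rw [hiter t ht n] at this
        linarith
      · obtain ⟨n, hn⟩ := exists_nat_gt ((1 - f t) / (l * D t))
        have hn' : (1:ℝ) - f t < (n : ℝ) * (l * D t) := by
          rw [div_lt_iff₀ hpos] at hn
          linarith
        have hmem : (0:ℝ) ≤ t + n * l := by
          have : (0:ℝ) ≤ (n:ℝ) * l := by positivity
          linarith
        have := (hbd (t + n * l) hmem).2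
        rw [hiter t ht n] at this
        linarith
    have : D t = 0 := by
      rcases mul_eq_zero.mp hld with h' | h'
      · exact absurd h' (ne_of_gt hl)
      · exact h'
    exact this
  -- D a = 0 by continuity
  have hDa : D a = 0 := by
    have hcont : ContinuousAt D a := by
      have h1 : ContinuousAt f a := hf.continuousAt (Ici_mem_nhds ha)
      have h2 : ContinuousAt F a := (hF0 ha).continuousAt
      exact ((h1.mul continuousAt_id).sub h2).div ((continuous_pow 2).continuousAt)
        (by positivity)
    have h1 : Filter.Tendsto D (nhdsWithin a (Set.Ioi a)) (nhds (D a)) :=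
      hcont.continuousWithinAt.tendsto
    have h2 : Filter.Tendsto D (nhdsWithin a (Set.Ioi a)) (nhds 0) := by
      apply Filter.Tendsto.congr' _ tendsto_const_nhds
      filter_upwards [self_mem_nhdsWithin] with s hs
      exact (hD0 s (Set.mem_Ioi.mp hs)).symm
    exact tendsto_nhds_unique h1 h2
  have hD : ∀ t : ℝ, a ≤ t → D t = 0 := by
    intro t ht
    rcases eq_or_lt_of_le ht with rfl | ht'
    · exact hDa
    · exact hD0 t ht'
  -- f t = G t on [a, ∞)
  have hfG : ∀ t : ℝ, a ≤ t → f t = G t := by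
    intro t ht
    have htpos : (0:ℝ) < t := ha.trans_le ht
    have := hD t ht
    simp only [hDdef] at this
    have h2 : f t * t - F t = 0 := by
      field_simp at this
      linarith
    simp only [hGdef]
    field_simp
    linarith
  -- G constant on [a, ∞)
  intro t ht
  have hGconst : G t = G a := by
    have := constant_of_has_deriv_right_zero (f := G) (a := a) (b := t)
      (fun x hx => by
        have : (0:ℝ) < x := ha.trans_le hx.1
        exact (hG' this).continuousAt.continuousWithinAt)
      (fun x hx => by
        have hx0 : (0:ℝ) < x := ha.trans_le hx.1
        have := (hG' hx0).hasDerivWithinAt (s := Set.Ici x)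
        rwa [hD x hx.1] at this)
    exact this t ⟨ht, le_rfl⟩
  have := hfG t ht
  rw [this, hGconst]
  simp only [hGdef, hFdef]
  ring
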